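/- Let d ≥ 1 and 0 ≤ j < k ≤ d be integers with n := k−j−1 ≥ 1, and set a_i := i + (d−1−k+j)/2 for i = 1, …, n+1 (these are positive real numbers). Let G be a real polynomial in two variables X, Y such that for all real x, y: y · G(x,y) = Im( ∏_{i=1}^{n+1} ((x+iy) − a_i) · ((x−iy) + a_i) ). Then: (1) at every real point (x,y) with G(x,y) = 0, the gradient (∂G/∂X (x,y), ∂G/∂Y (x,y)) is nonzero; (2) if G(x,y) = 0 and ∂G/∂X (x,y) = 0, then x = 0. -/

import Mathlib

open MvPolynomial

lemma hasDerivAt_eval_fst (y : ℝ) (p : MvPolynomial (Fin 2) ℝ) (x : ℝ) :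
    HasDerivAt (fun t => MvPolynomial.eval ![t, y] p)
      (MvPolynomial.eval ![x, y] (MvPolynomial.pderiv 0 p)) x := by
  induction p using MvPolynomial.induction_on with
  | C a => simpa using hasDerivAt_const x a
  | add p q hp hq => simpa using hp.fun_add hq
  | mul_X p i hp =>
      fin_cases i
      · have := hp.fun_mul (hasDerivAt_id x)
        simpa [mul_comm, mul_assoc, mul_left_comm, add_comm] using this
      · have := hp.mul_const y
        simpa [mul_comm, mul_assoc, mul_left_comm, add_comm] using this

lemma hasDerivAt_eval_snd (x : ℝ) (p : MvPolynomial (Fin 2) ℝ) (y : ℝ) :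
    HasDerivAt (fun t => MvPolynomial.eval ![x, t] p)
      (MvPolynomial.eval ![x, y] (MvPolynomial.pderiv 1 p)) y := by
  induction p using MvPolynomial.induction_on with
  | C a => simpa using hasDerivAt_const y a
  | add p q hp hq => simpa using hp.fun_add hq
  | mul_X p i hp =>
      fin_cases i
      · have := hp.mul_const x
        simpa [mul_comm, mul_assoc, mul_left_comm, add_comm] using this
      · have := hp.fun_mul (hasDerivAt_id y)
        simpa [mul_comm, mul_assoc, mul_left_comm, add_comm] using this

lemma HasDerivAt.complex_im {f : ℝ → ℂ} {f' : ℂ} {x : ℝ} (hf : HasDerivAt f f' x) :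
    HasDerivAt (fun t => (f t).im) f'.im x := by
  simpa [Function.comp_def] using (Complex.imCLM.hasFDerivAt.comp x hf.hasFDerivAt).hasDerivAt
open Polynomial Finset

lemma finset_erase_comm (s : Finset ℕ) (a b : ℕ) :
    (s.erase a).erase b = (s.erase b).erase a := by
  ext n; simp only [Finset.mem_erase]; tauto

lemma sum_erase_swap (s : Finset ℕ) (A : ℕ → ℕ → ℝ) :
    ∑ i ∈ s, ∑ k ∈ s.erase i, A i k = ∑ i ∈ s, ∑ k ∈ s.erase i, A k i := by
  rw [Finset.sum_comm' (t' := s) (s' := fun k => s.erase k)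
    (fun i k => by simp only [Finset.mem_erase]; tauto)]

lemma derivative_finset_prod (u : Finset ℕ) (f : ℕ → Polynomial ℝ) :
    Polynomial.derivative (∏ j ∈ u, f j)
      = ∑ k ∈ u, (∏ j ∈ u.erase k, f j) * Polynomial.derivative (f k) := by
  classical
  induction u using Finset.induction_on with
  | empty => simp
  | @insert b v hb ih =>
    rw [Finset.prod_insert hb, Polynomial.derivative_mul, ih, Finset.sum_insert hb,
      Finset.erase_insert hb, Finset.mul_sum]
    congr 1
    · ring
    · refine Finset.sum_congr rfl fun k hk => ?_
      have hkb : k ≠ b := fun h => hb (h ▸ hk)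
      rw [Finset.erase_insert_of_ne hkb.symm,
        Finset.prod_insert (fun h => hb (Finset.mem_of_mem_erase h))]
      ring
open Polynomial Finset

section Qpoly

variable (m : ℕ) (a : ℕ → ℝ)

noncomputable def qpoly : Polynomial ℝ :=
  ∑ i ∈ Finset.Icc 1 m, Polynomial.C (2 * a i) *
    ∏ j ∈ (Finset.Icc 1 m).erase i, (Polynomial.X - Polynomial.C ((a j) ^ 2))

variable {m a}
variable (hm : 2 ≤ m) (hpos : ∀ i ∈ Finset.Icc 1 m, 0 < a i) (hmono : StrictMono a)

lemma prod_neg_aux {u : Finset ℕ} (f : ℕ → ℝ) :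
    ∏ j ∈ u, (-(f j)) = (-1 : ℝ) ^ u.card * ∏ j ∈ u, f j := by
  rw [← Finset.prod_const, ← Finset.prod_mul_distrib]
  simp

include hm hpos in
lemma qpoly_eval_zero_ne : (qpoly m a).eval 0 ≠ 0 := by
  have key : (-1 : ℝ) ^ (m - 1) * (qpoly m a).eval 0
      = ∑ i ∈ Finset.Icc 1 m, 2 * a i * ∏ j ∈ (Finset.Icc 1 m).erase i, (a j) ^ 2 := by
    rw [qpoly, Polynomial.eval_finset_sum, Finset.mul_sum]
    refine Finset.sum_congr rfl fun i hi => ?_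
    have hcard : ((Finset.Icc 1 m).erase i).card = m - 1 := by
      rw [Finset.card_erase_of_mem hi, Nat.card_Icc]; omega
    have : ∏ j ∈ (Finset.Icc 1 m).erase i, ((0:ℝ) - (a j) ^ 2)
        = (-1 : ℝ) ^ (m - 1) * ∏ j ∈ (Finset.Icc 1 m).erase i, (a j) ^ 2 := by
      rw [← hcard]
      simpa using prod_neg_aux (fun j => (a j) ^ 2)
    simp only [Polynomial.eval_mul, Polynomial.eval_C, Polynomial.eval_prod,
      Polynomial.eval_sub, Polynomial.eval_X, Polynomial.eval_pow, this]
    rw [← mul_assoc, ← mul_assoc, mul_comm ((-1:ℝ)^(m-1)) (2 * a i), mul_assoc (2*a i),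
      ← pow_add]
    have : Even ((m-1) + (m-1)) := ⟨m-1, rfl⟩
    rw [this.neg_one_pow]
    ring
  have hpos' : 0 < ∑ i ∈ Finset.Icc 1 m, 2 * a i * ∏ j ∈ (Finset.Icc 1 m).erase i, (a j) ^ 2 := by
    apply Finset.sum_pos
    · intro i hi
      apply mul_pos (by linarith [hpos i hi])
      apply Finset.prod_pos
      intro j hj
      have := hpos j (Finset.mem_of_mem_erase hj)
      positivity
    · exact ⟨1, by simp [Finset.mem_Icc]; omega⟩
  intro h
  rw [h, mul_zero] at key
  linarith [key ▸ hpos']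

include hpos hmono in
lemma qpoly_eval_sq_sign : ∀ i ∈ Finset.Icc 1 m,
    0 < (-1 : ℝ) ^ (m - i) * (qpoly m a).eval ((a i) ^ 2) := by
  intro i hi
  have hi' := Finset.mem_Icc.mp hi
  have heval : (qpoly m a).eval ((a i) ^ 2)
      = 2 * a i * ∏ j ∈ (Finset.Icc 1 m).erase i, ((a i) ^ 2 - (a j) ^ 2) := by
    rw [qpoly, Polynomial.eval_finset_sum]
    rw [Finset.sum_eq_single i]
    · simp [Polynomial.eval_prod]
    · intro i' hi' hne
      have himem : i ∈ (Finset.Icc 1 m).erase i' := Finset.mem_erase.mpr ⟨hne.symm, hi⟩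
      rw [Polynomial.eval_mul, Polynomial.eval_prod]
      rw [Finset.prod_eq_zero himem (by simp)]
      ring
    · intro h; exact absurd hi h
  have hsplit : (Finset.Icc 1 m).erase i = Finset.Icc 1 (i-1) ∪ Finset.Icc (i+1) m := by
    ext n; simp only [Finset.mem_erase, Finset.mem_Icc, Finset.mem_union]; omega
  have hdisj : Disjoint (Finset.Icc 1 (i-1)) (Finset.Icc (i+1) m) := by
    rw [Finset.disjoint_left]; intro n hn hn'
    simp only [Finset.mem_Icc] at hn hn'; omega
  have hlowpos : 0 < ∏ j ∈ Finset.Icc 1 (i-1), ((a i) ^ 2 - (a j) ^ 2) := by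
    apply Finset.prod_pos
    intro j hj
    simp only [Finset.mem_Icc] at hj
    have hj2 : 0 < a j := hpos j (Finset.mem_Icc.mpr ⟨hj.1, by omega⟩)
    have : a j < a i := hmono (by omega)
    nlinarith
  have hcardhigh : (Finset.Icc (i+1) m).card = m - i := by rw [Nat.card_Icc]; omega
  have hhigh : ∏ j ∈ Finset.Icc (i+1) m, ((a i) ^ 2 - (a j) ^ 2)
      = (-1 : ℝ) ^ (m - i) * ∏ j ∈ Finset.Icc (i+1) m, ((a j) ^ 2 - (a i) ^ 2) := by
    rw [← hcardhigh]
    have := prod_neg_aux (u := Finset.Icc (i+1) m) (fun j => (a j) ^ 2 - (a i) ^ 2)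
    simpa using this
  have hhighpos : 0 < ∏ j ∈ Finset.Icc (i+1) m, ((a j) ^ 2 - (a i) ^ 2) := by
    apply Finset.prod_pos
    intro j hj
    simp only [Finset.mem_Icc] at hj
    have hi2 : 0 < a i := hpos i hi
    have : a i < a j := hmono (by omega)
    nlinarith
  rw [heval, hsplit, Finset.prod_union hdisj, hhigh]
  have h1 : 0 < 2 * a i := by linarith [hpos i hi]
  have heven : Even ((m - i) + (m - i)) := ⟨m - i, rfl⟩
  calc (0:ℝ) < (2 * a i) * ((∏ j ∈ Finset.Icc 1 (i-1), ((a i) ^ 2 - (a j) ^ 2)) *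
        (∏ j ∈ Finset.Icc (i+1) m, ((a j) ^ 2 - (a i) ^ 2))) := by positivity
    _ = (-1 : ℝ) ^ (m - i) * (2 * a i * ((∏ j ∈ Finset.Icc 1 (i-1), ((a i) ^ 2 - (a j) ^ 2)) *
        ((-1 : ℝ) ^ (m - i) * ∏ j ∈ Finset.Icc (i+1) m, ((a j) ^ 2 - (a i) ^ 2)))) := by
      rw [show ∀ A B C : ℝ, (-1:ℝ)^(m-i) * (A * (B * ((-1:ℝ)^(m-i) * C)))
        = ((-1:ℝ)^(m-i) * (-1:ℝ)^(m-i)) * (A * (B * C)) from fun A B C => by ring,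
        ← pow_add, heven.neg_one_pow, one_mul]

include hm hpos hmono in
lemma qpoly_ne_zero : qpoly m a ≠ 0 := by
  intro h
  have := qpoly_eval_sq_sign hpos hmono m (Finset.mem_Icc.mpr ⟨by omega, le_refl m⟩)
  rw [h] at this
  simp at this

include hm hpos in
lemma qpoly_natDegree_le : (qpoly m a).natDegree ≤ m - 1 := by
  apply Polynomial.natDegree_sum_le_of_forall_le
  intro i hi
  have h1 : (∏ j ∈ (Finset.Icc 1 m).erase i,
      (Polynomial.X - Polynomial.C ((a j) ^ 2))).natDegree ≤ m - 1 := by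
    refine le_trans (Polynomial.natDegree_prod_le _ _) ?_
    have hc : ∀ j ∈ (Finset.Icc 1 m).erase i,
        (Polynomial.X - Polynomial.C ((a j) ^ 2)).natDegree = 1 :=
      fun j _ => Polynomial.natDegree_X_sub_C _
    rw [Finset.sum_congr rfl hc, Finset.sum_const, smul_eq_mul, mul_one,
      Finset.card_erase_of_mem hi, Nat.card_Icc]
    omega
  refine le_trans Polynomial.natDegree_mul_le ?_
  rw [Polynomial.natDegree_C, zero_add]
  exact h1

include hm hpos hmono in
lemma qpoly_simple_roots : ∀ t : ℝ, (qpoly m a).eval t = 0 →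
    (qpoly m a).derivative.eval t ≠ 0 := by
  intro t0 ht0 ht0'
  -- roots in each interval
  have hroot : ∀ i, ∃ t : ℝ, i ∈ Finset.Icc 1 (m-1) →
      (a i) ^ 2 < t ∧ t < (a (i+1)) ^ 2 ∧ (qpoly m a).eval t = 0 := by
    intro i
    by_cases hi : i ∈ Finset.Icc 1 (m-1)
    · have hi' := Finset.mem_Icc.mp hi
      have h1 := qpoly_eval_sq_sign hpos hmono i (Finset.mem_Icc.mpr ⟨hi'.1, by omega⟩)
      have h2 := qpoly_eval_sq_sign hpos hmono (i+1) (Finset.mem_Icc.mpr ⟨by omega, by omega⟩)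
      have hmi : m - i = (m - (i+1)) + 1 := by omega
      set A := (qpoly m a).eval ((a i) ^ 2) with hA
      set B := (qpoly m a).eval ((a (i+1)) ^ 2) with hB
      have hAB : A * B < 0 := by
        rw [hmi, pow_succ] at h1
        nlinarith [sq_nonneg ((-1:ℝ) ^ (m - (i+1)))]
      have hab : (a i) ^ 2 ≤ (a (i+1)) ^ 2 := by
        have h0 : 0 < a i := hpos i (Finset.mem_Icc.mpr ⟨hi'.1, by omega⟩)
        have : a i < a (i+1) := hmono (by omega)
        nlinarith
      have hcont : ContinuousOn (fun t => (qpoly m a).eval t)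
          (Set.Icc ((a i) ^ 2) ((a (i+1)) ^ 2)) :=
        (Polynomial.continuous _).continuousOn
      rcases lt_or_ge A 0 with hA0 | hA0
      · have hB0 : 0 < B := by nlinarith
        have := intermediate_value_Ioo hab hcont (a := (a i)^2)
        have hmem : (0:ℝ) ∈ Set.Ioo A B := ⟨hA0, hB0⟩
        obtain ⟨t, htI, htv⟩ := this hmem
        exact ⟨t, fun _ => ⟨htI.1, htI.2, htv⟩⟩
      · have hA0' : 0 < A := by
          rcases lt_or_eq_of_le hA0 with h | h
          · exact h
          · exfalso; rw [← h, mul_zero] at h1; exact lt_irrefl 0 h1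
        have hB0 : B < 0 := by nlinarith
        have := intermediate_value_Ioo' hab hcont
        have hmem : (0:ℝ) ∈ Set.Ioo B A := ⟨hB0, hA0'⟩
        obtain ⟨t, htI, htv⟩ := this hmem
        exact ⟨t, fun _ => ⟨htI.1, htI.2, htv⟩⟩
    · exact ⟨0, fun h => absurd h hi⟩
  choose tfun htfun using hroot
  have hqne : qpoly m a ≠ 0 := qpoly_ne_zero hm hpos hmono
  -- tfun strictly monotone on Icc 1 (m-1)
  have hlt : ∀ i ∈ Finset.Icc 1 (m-1), ∀ i' ∈ Finset.Icc 1 (m-1), i < i' →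
      tfun i < tfun i' := by
    intro i hi i' hi' hii
    obtain ⟨h1, h2, _⟩ := htfun i hi
    obtain ⟨h1', h2', _⟩ := htfun i' hi'
    have hle : (a (i+1)) ^ 2 ≤ (a i') ^ 2 := by
      rcases eq_or_lt_of_le (show i + 1 ≤ i' by omega) with h | h
      · rw [h]
      · have h0 : 0 < a (i+1) := by
          apply hpos
          simp only [Finset.mem_Icc] at hi hi' ⊢; omega
        have := hmono h
        nlinarith
    linarith
  have hinj : Set.InjOn tfun (Finset.Icc 1 (m-1) : Set ℕ) := by
    intro i hi i' hi' h
    by_contra hne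
    rcases lt_or_gt_of_ne hne with hc | hc
    · exact absurd h (ne_of_lt (hlt i (by exact_mod_cast hi) i' (by exact_mod_cast hi') hc))
    · exact absurd h.symm (ne_of_lt (hlt i' (by exact_mod_cast hi') i (by exact_mod_cast hi) hc))
  set T : Finset ℝ := (Finset.Icc 1 (m-1)).image tfun with hT
  have hTcard : T.card = m - 1 := by
    rw [hT, Finset.card_image_of_injOn hinj, Nat.card_Icc]
    omega
  have hTnodup : T.val.Nodup := T.nodup
  -- multiset counting
  have hmult : 1 < (qpoly m a).rootMultiplicity t0 :=
    (Polynomial.one_lt_rootMultiplicity_iff_isRoot hqne).mpr ⟨ht0, ht0'⟩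
  have hle : (t0 ::ₘ T.val) ≤ (qpoly m a).roots := by
    rw [Multiset.le_iff_count]
    intro u
    rw [Multiset.count_cons]
    have hcount_roots : ∀ v : ℝ, (qpoly m a).roots.count v = (qpoly m a).rootMultiplicity v :=
      fun v => Polynomial.count_roots _
    by_cases hu : u = t0
    · subst hu
      have hTle : T.val.count u ≤ 1 := Multiset.nodup_iff_count_le_one.mp hTnodup u
      rw [hcount_roots]
      simp only [if_pos rfl]
      simp only [eq_self_iff_true, if_true]
      omega
    · simp only [if_neg hu, add_zero]
      by_cases huT : u ∈ T.val
      · have hroot_u : (qpoly m a).IsRoot u := by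
          rw [hT] at huT
          simp only [Finset.mem_val, Finset.mem_image] at huT
          obtain ⟨i, hi, rfl⟩ := huT
          exact (htfun i hi).2.2
        have h1 : 1 ≤ (qpoly m a).rootMultiplicity u :=
          (Polynomial.rootMultiplicity_pos hqne).mpr hroot_u
        have hTle : T.val.count u ≤ 1 := Multiset.nodup_iff_count_le_one.mp hTnodup u
        rw [hcount_roots]; omega
      · rw [Multiset.count_eq_zero_of_notMem huT]; omega
  have hcard1 : Multiset.card (t0 ::ₘ T.val) = m := by
    rw [Multiset.card_cons]
    have : Multiset.card T.val = T.card := rfl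
    rw [this, hTcard]; omega
  have hcard2 : Multiset.card ((qpoly m a).roots) ≤ m - 1 :=
    le_trans (Polynomial.card_roots' _) (qpoly_natDegree_le hm hpos)
  have := Multiset.card_le_card hle
  omega

end Qpoly

/-- Proposition 4.4: smoothness of the curve `𝒟_{j,k}` and location of its
horizontal tangents. Here `G ∈ ℝ[X,Y]` is the defining polynomial, characterized by
`y · G(x,y) = Im ∏_{i=1}^{n+1} ((x+iy) - a_i)((x-iy) + a_i)` with
`a_i = i + (d-1-k+j)/2` and `n = k-j-1`. -/
theorem stmt_11 (d j k : ℕ) (hd : 1 ≤ d) (hjk : j < k) (hkd : k ≤ d)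
    (hn : 1 ≤ k - j - 1)
    (G : MvPolynomial (Fin 2) ℝ)
    (hG : ∀ x y : ℝ,
      y * MvPolynomial.eval ![x, y] G =
        (∏ i ∈ Finset.Icc 1 (k - j),
          ((((x : ℂ) + y * Complex.I) -
              (((i : ℝ) + ((d : ℝ) - 1 - k + j) / 2 : ℝ) : ℂ)) *
            (((x : ℂ) - y * Complex.I) +
              (((i : ℝ) + ((d : ℝ) - 1 - k + j) / 2 : ℝ) : ℂ)))).im) :
    (∀ x y : ℝ, MvPolynomial.eval ![x, y] G = 0 →
        (MvPolynomial.eval ![x, y] (MvPolynomial.pderiv 0 G) ≠ 0 ∨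
          MvPolynomial.eval ![x, y] (MvPolynomial.pderiv 1 G) ≠ 0))
    ∧ (∀ x y : ℝ, MvPolynomial.eval ![x, y] G = 0 →
        MvPolynomial.eval ![x, y] (MvPolynomial.pderiv 0 G) = 0 → x = 0) := by
  classical
  set m := k - j with hmdef
  have hm2 : 2 ≤ m := by omega
  set a : ℕ → ℝ := fun i => (i : ℝ) + ((d : ℝ) - 1 - k + j) / 2 with hadef
  have hmono : StrictMono a := by
    intro p q hpq
    have : (p : ℝ) < q := by exact_mod_cast hpq
    simp only [hadef]; linarith
  have hapos : ∀ i ∈ Finset.Icc 1 m, 0 < a i := by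
    intro i hi
    rw [Finset.mem_Icc] at hi
    have h1 : (1 : ℝ) ≤ (i : ℝ) := by exact_mod_cast hi.1
    have hkd' : (k : ℝ) ≤ (d : ℝ) := by exact_mod_cast hkd
    have hj0 : (0 : ℝ) ≤ (j : ℝ) := by positivity
    simp only [hadef]; linarith
  set F : ℕ → ℝ → ℝ → ℂ := fun i x y =>
    (((x ^ 2 + y ^ 2 - (a i) ^ 2 : ℝ) : ℂ) + ((2 * a i * y : ℝ) : ℂ) * Complex.I) with hFdef
  have hGF : ∀ x y : ℝ, y * MvPolynomial.eval ![x, y] G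
      = (∏ i ∈ Finset.Icc 1 m, F i x y).im := by
    intro x y
    rw [hG x y]
    congr 1
    refine Finset.prod_congr rfl fun i _ => ?_
    simp only [hFdef, hadef]
    push_cast
    linear_combination (-(y : ℂ) ^ 2) * Complex.I_sq
  have hFim : ∀ i (x y : ℝ), (F i x y).im = 2 * a i * y := by
    intro i x y
    simp only [hFdef, Complex.add_im, Complex.ofReal_im, Complex.mul_im, Complex.ofReal_re,
      Complex.I_im, Complex.I_re, mul_zero, mul_one, zero_add, add_zero, zero_mul]
  have hFre : ∀ i (x y : ℝ), (F i x y).re = x ^ 2 + y ^ 2 - (a i) ^ 2 := by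
    intro i x y
    simp only [hFdef, Complex.add_re, Complex.ofReal_re, Complex.mul_re, Complex.ofReal_im,
      Complex.I_im, Complex.I_re, mul_zero, mul_one, zero_add, add_zero, zero_mul, sub_zero]
  have hFx : ∀ i (x y : ℝ), HasDerivAt (fun t => F i t y) (((2 * x : ℝ) : ℂ)) x := by
    intro i x y
    have h1 : HasDerivAt (fun t : ℝ => t ^ 2 + y ^ 2 - (a i) ^ 2) (2 * x) x := by
      simpa using ((hasDerivAt_pow 2 x).add_const (y ^ 2)).sub_const ((a i) ^ 2)
    have h2 := (h1.ofReal_comp).add_const (((2 * a i * y : ℝ) : ℂ) * Complex.I)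
    simpa [hFdef] using h2
  have hFy : ∀ i (x y : ℝ), HasDerivAt (fun t => F i x t)
      (((2 * y : ℝ) : ℂ) + ((2 * a i : ℝ) : ℂ) * Complex.I) y := by
    intro i x y
    have h1 : HasDerivAt (fun t : ℝ => x ^ 2 + t ^ 2 - (a i) ^ 2) (2 * y) y := by
      simpa using ((hasDerivAt_pow 2 y).const_add (x ^ 2)).sub_const ((a i) ^ 2)
    have h3 : HasDerivAt (fun t : ℝ => 2 * a i * t) (2 * a i) y := by
      simpa using (hasDerivAt_id y).const_mul (2 * a i)
    have h4 := (h3.ofReal_comp).mul_const Complex.I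
    have h5 := (h1.ofReal_comp).fun_add h4
    simpa [hFdef] using h5
  have hPx : ∀ x y : ℝ, HasDerivAt (fun t => ∏ i ∈ Finset.Icc 1 m, F i t y)
      (∑ i ∈ Finset.Icc 1 m, (∏ j' ∈ (Finset.Icc 1 m).erase i, F j' x y) * ((2 * x : ℝ) : ℂ)) x := by
    intro x y
    have := HasDerivAt.fun_finsetProd (u := Finset.Icc 1 m) (f := fun i t => F i t y)
      (f' := fun _ => ((2 * x : ℝ) : ℂ)) (x := x) (fun i _ => hFx i x y)
    simpa [smul_eq_mul] using this
  have hPy : ∀ x y : ℝ, HasDerivAt (fun t => ∏ i ∈ Finset.Icc 1 m, F i x t)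
      (∑ i ∈ Finset.Icc 1 m, (∏ j' ∈ (Finset.Icc 1 m).erase i, F j' x y) *
        (((2 * y : ℝ) : ℂ) + ((2 * a i : ℝ) : ℂ) * Complex.I)) y := by
    intro x y
    have := HasDerivAt.fun_finsetProd (u := Finset.Icc 1 m) (f := fun i t => F i x t)
      (f' := fun i => ((2 * y : ℝ) : ℂ) + ((2 * a i : ℝ) : ℂ) * Complex.I) (x := y)
      (fun i _ => hFy i x y)
    simpa [smul_eq_mul] using this
  have EqX : ∀ x y : ℝ, y * MvPolynomial.eval ![x, y] (MvPolynomial.pderiv 0 G)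
      = (∑ i ∈ Finset.Icc 1 m, (∏ j' ∈ (Finset.Icc 1 m).erase i, F j' x y)
          * ((2 * x : ℝ) : ℂ)).im := by
    intro x y
    have h1 : HasDerivAt (fun t => y * MvPolynomial.eval ![t, y] G)
        (y * MvPolynomial.eval ![x, y] (MvPolynomial.pderiv 0 G)) x :=
      (hasDerivAt_eval_fst y G x).const_mul y
    have h2 := (hPx x y).complex_im
    have h3 : (fun t => y * MvPolynomial.eval ![t, y] G)
        = fun t => (∏ i ∈ Finset.Icc 1 m, F i t y).im := funext fun t => hGF t y
    rw [h3] at h1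
    exact h1.unique h2
  have EqY : ∀ x y : ℝ, MvPolynomial.eval ![x, y] G
        + y * MvPolynomial.eval ![x, y] (MvPolynomial.pderiv 1 G)
      = (∑ i ∈ Finset.Icc 1 m, (∏ j' ∈ (Finset.Icc 1 m).erase i, F j' x y) *
          (((2 * y : ℝ) : ℂ) + ((2 * a i : ℝ) : ℂ) * Complex.I)).im := by
    intro x y
    have h1 : HasDerivAt (fun t => t * MvPolynomial.eval ![x, t] G)
        (MvPolynomial.eval ![x, y] G
          + y * MvPolynomial.eval ![x, y] (MvPolynomial.pderiv 1 G)) y := by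
      have := (hasDerivAt_id y).fun_mul (hasDerivAt_eval_snd x G y)
      simpa using this
    have h2 := (hPy x y).complex_im
    have h3 : (fun t => t * MvPolynomial.eval ![x, t] G)
        = fun t => (∏ i ∈ Finset.Icc 1 m, F i x t).im := funext fun t => hGF x t
    rw [h3] at h1
    exact h1.unique h2
  -- main case analyses
  have key1 : ∀ x y : ℝ, y ≠ 0 → MvPolynomial.eval ![x, y] G = 0 →
      (x ≠ 0 → MvPolynomial.eval ![x, y] (MvPolynomial.pderiv 0 G) ≠ 0) ∧
      (x = 0 → MvPolynomial.eval ![x, y] (MvPolynomial.pderiv 1 G) ≠ 0) := by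
    intro x y hy hg
    have hsne : (Finset.Icc 1 m).Nonempty := ⟨1, by rw [Finset.mem_Icc]; omega⟩
    have hFne : ∀ i ∈ Finset.Icc 1 m, F i x y ≠ 0 := by
      intro i hi h0
      have him := hFim i x y
      rw [h0] at him
      have hai := hapos i hi
      simp only [Complex.zero_im] at him
      have : 2 * a i * y ≠ 0 := mul_ne_zero (mul_ne_zero two_ne_zero (ne_of_gt hai)) hy
      exact this him.symm
    have hQne : (∏ i ∈ Finset.Icc 1 m, F i x y) ≠ 0 := Finset.prod_ne_zero_iff.mpr hFne
    have hQim : (∏ i ∈ Finset.Icc 1 m, F i x y).im = 0 := by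
      have := hGF x y
      rw [hg, mul_zero] at this
      exact this.symm
    have hQre : (∏ i ∈ Finset.Icc 1 m, F i x y).re ≠ 0 := by
      intro h
      exact hQne (Complex.ext (by simpa using h) (by simpa using hQim))
    have herase : ∀ i ∈ Finset.Icc 1 m, ∏ j' ∈ (Finset.Icc 1 m).erase i, F j' x y
        = (∏ i' ∈ Finset.Icc 1 m, F i' x y) * (F i x y)⁻¹ := by
      intro i hi
      rw [← Finset.mul_prod_erase (Finset.Icc 1 m) _ hi, mul_comm (F i x y), mul_assoc,
        mul_inv_cancel₀ (hFne i hi), mul_one]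
    have hnspos : ∀ i ∈ Finset.Icc 1 m, 0 < Complex.normSq (F i x y) := by
      intro i hi
      exact Complex.normSq_pos.mpr (hFne i hi)
    have hSpos : 0 < ∑ i ∈ Finset.Icc 1 m, (2 * a i) / Complex.normSq (F i x y) := by
      apply Finset.sum_pos _ hsne
      intro i hi
      exact div_pos (by linarith [hapos i hi]) (hnspos i hi)
    have hx1 : y * MvPolynomial.eval ![x, y] (MvPolynomial.pderiv 0 G)
        = (2 * x * (∏ i' ∈ Finset.Icc 1 m, F i' x y).re * -y) *
          (∑ i ∈ Finset.Icc 1 m, (2 * a i) / Complex.normSq (F i x y)) := by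
      rw [EqX x y, Complex.im_sum, Finset.mul_sum]
      refine Finset.sum_congr rfl fun i hi => ?_
      rw [herase i hi]
      simp only [Complex.mul_im, Complex.mul_re, Complex.inv_im, Complex.inv_re,
        Complex.ofReal_im, Complex.ofReal_re, hQim, hFim]
      ring
    constructor
    · intro hx h0
      rw [h0, mul_zero] at hx1
      have hne : (2 * x * (∏ i' ∈ Finset.Icc 1 m, F i' x y).re * -y) *
          (∑ i ∈ Finset.Icc 1 m, (2 * a i) / Complex.normSq (F i x y)) ≠ 0 := by
        apply mul_ne_zero _ (ne_of_gt hSpos)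
        exact mul_ne_zero (mul_ne_zero (mul_ne_zero two_ne_zero hx) hQre) (neg_ne_zero.mpr hy)
      exact hne hx1.symm
    · intro hx0
      subst hx0
      have hS2pos : 0 < ∑ i ∈ Finset.Icc 1 m,
          (2 * a i * (y ^ 2 + (a i) ^ 2)) / Complex.normSq (F i 0 y) := by
        apply Finset.sum_pos _ hsne
        intro i hi
        have hai := hapos i hi
        apply div_pos _ (hnspos i hi)
        positivity
      have hy1 : MvPolynomial.eval ![(0:ℝ), y] G
            + y * MvPolynomial.eval ![(0:ℝ), y] (MvPolynomial.pderiv 1 G)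
          = (∏ i' ∈ Finset.Icc 1 m, F i' 0 y).re *
            -(∑ i ∈ Finset.Icc 1 m,
              (2 * a i * (y ^ 2 + (a i) ^ 2)) / Complex.normSq (F i 0 y)) := by
        rw [EqY 0 y, Complex.im_sum, ← Finset.sum_neg_distrib, Finset.mul_sum]
        refine Finset.sum_congr rfl fun i hi => ?_
        rw [herase i hi]
        simp only [Complex.mul_im, Complex.mul_re, Complex.inv_im, Complex.inv_re,
          Complex.add_im, Complex.add_re, Complex.ofReal_im, Complex.ofReal_re,
          Complex.I_re, Complex.I_im, hQim, hFim, hFre]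
        ring
      rw [hg, zero_add] at hy1
      intro h0
      rw [h0, mul_zero] at hy1
      have hne : (∏ i' ∈ Finset.Icc 1 m, F i' 0 y).re *
          -(∑ i ∈ Finset.Icc 1 m,
            (2 * a i * (y ^ 2 + (a i) ^ 2)) / Complex.normSq (F i 0 y)) ≠ 0 :=
        mul_ne_zero hQre (neg_ne_zero.mpr (ne_of_gt hS2pos))
      exact hne hy1.symm
  have key2 : ∀ x : ℝ, MvPolynomial.eval ![x, 0] G = 0 →
      MvPolynomial.eval ![x, 0] (MvPolynomial.pderiv 0 G) ≠ 0 := by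
    have hq0 : (qpoly m a).eval 0 ≠ 0 := qpoly_eval_zero_ne hm2 hapos
    have hqsr := qpoly_simple_roots hm2 hapos hmono
    have hF0 : ∀ (i' : ℕ) (x : ℝ), F i' x 0 = ((x ^ 2 - (a i') ^ 2 : ℝ) : ℂ) := by
      intro i' x
      simp only [hFdef]
      norm_num
    have hprod0 : ∀ (u : Finset ℕ) (x : ℝ),
        (∏ j' ∈ u, F j' x 0) = ((∏ j' ∈ u, (x ^ 2 - (a j') ^ 2) : ℝ) : ℂ) := by
      intro u x
      rw [Finset.prod_congr rfl fun j' _ => hF0 j' x, Complex.ofReal_prod]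
    have hg0 : ∀ x : ℝ, MvPolynomial.eval ![x, 0] G = (qpoly m a).eval (x ^ 2) := by
      intro x
      have h1 : HasDerivAt (fun t => t * MvPolynomial.eval ![x, t] G)
          (MvPolynomial.eval ![x, 0] G) 0 := by
        have := (hasDerivAt_id 0).fun_mul (hasDerivAt_eval_snd x G 0)
        simpa using this
      have h2 := (hPy x 0).complex_im
      have h3 : (fun t => t * MvPolynomial.eval ![x, t] G)
          = fun t => (∏ i ∈ Finset.Icc 1 m, F i x t).im := funext fun t => hGF x t
      rw [h3] at h1
      rw [h1.unique h2, Complex.im_sum, qpoly, Polynomial.eval_finset_sum]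
      refine Finset.sum_congr rfl fun i hi => ?_
      rw [hprod0]
      simp only [Complex.mul_im, Complex.add_im, Complex.add_re, Complex.ofReal_im,
        Complex.ofReal_re, Complex.mul_re, Complex.I_re, Complex.I_im,
        Polynomial.eval_mul, Polynomial.eval_C, Polynomial.eval_prod, Polynomial.eval_sub,
        Polynomial.eval_X, Polynomial.eval_pow]
      ring
    have hgx0 : ∀ x : ℝ, MvPolynomial.eval ![x, 0] (MvPolynomial.pderiv 0 G)
        = 2 * x * ((qpoly m a).derivative.eval (x ^ 2)) := by
      intro x
      have h1 : HasDerivAt (fun t => t * MvPolynomial.eval ![x, t] (MvPolynomial.pderiv 0 G))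
          (MvPolynomial.eval ![x, 0] (MvPolynomial.pderiv 0 G)) 0 := by
        have := (hasDerivAt_id 0).fun_mul (hasDerivAt_eval_snd x (MvPolynomial.pderiv 0 G) 0)
        simpa using this
      have h2 : HasDerivAt
          (fun t => (∑ i ∈ Finset.Icc 1 m, (∏ j' ∈ (Finset.Icc 1 m).erase i, F j' x t)
            * ((2 * x : ℝ) : ℂ)).im)
          ((∑ i ∈ Finset.Icc 1 m, (∑ p ∈ (Finset.Icc 1 m).erase i,
              (∏ j' ∈ ((Finset.Icc 1 m).erase i).erase p, F j' x 0) *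
                (((2 * (0:ℝ) : ℝ) : ℂ) + ((2 * a p : ℝ) : ℂ) * Complex.I)) *
            ((2 * x : ℝ) : ℂ)).im) 0 := by
        apply HasDerivAt.complex_im
        apply HasDerivAt.fun_sum
        intro i hi
        have hp := HasDerivAt.fun_finsetProd (u := (Finset.Icc 1 m).erase i)
          (f := fun j' t => F j' x t)
          (f' := fun p => ((2 * (0:ℝ) : ℝ) : ℂ) + ((2 * a p : ℝ) : ℂ) * Complex.I) (x := (0:ℝ))
          (fun p _ => hFy p x 0)
        have := hp.mul_const ((2 * x : ℝ) : ℂ)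
        simpa [smul_eq_mul] using this
      have h3 : (fun t => t * MvPolynomial.eval ![x, t] (MvPolynomial.pderiv 0 G))
          = fun t => (∑ i ∈ Finset.Icc 1 m, (∏ j' ∈ (Finset.Icc 1 m).erase i, F j' x t)
            * ((2 * x : ℝ) : ℂ)).im := funext fun t => EqX x t
      rw [h3] at h1
      have hterm : ∀ i ∈ Finset.Icc 1 m,
          ((∑ p ∈ (Finset.Icc 1 m).erase i,
              (∏ j' ∈ ((Finset.Icc 1 m).erase i).erase p, F j' x 0) *
                (((2 * (0:ℝ) : ℝ) : ℂ) + ((2 * a p : ℝ) : ℂ) * Complex.I)) *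
            ((2 * x : ℝ) : ℂ)).im
          = 2 * x * ∑ p ∈ (Finset.Icc 1 m).erase i,
              2 * a p * ∏ j' ∈ ((Finset.Icc 1 m).erase i).erase p, (x ^ 2 - (a j') ^ 2) := by
        intro i hi
        rw [Complex.mul_im, Complex.ofReal_im, Complex.ofReal_re, mul_zero, zero_add,
          Complex.im_sum, Finset.sum_mul, Finset.mul_sum]
        refine Finset.sum_congr rfl fun p hp => ?_
        rw [hprod0]
        simp only [Complex.mul_im, Complex.add_im, Complex.add_re, Complex.ofReal_im,
          Complex.ofReal_re, Complex.mul_re, Complex.I_re, Complex.I_im]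
        ring
      rw [h1.unique h2, Complex.im_sum, Finset.sum_congr rfl hterm]
      have hq' : (qpoly m a).derivative.eval (x ^ 2)
          = ∑ i ∈ Finset.Icc 1 m, 2 * a i * ∑ p ∈ (Finset.Icc 1 m).erase i,
              ∏ j' ∈ ((Finset.Icc 1 m).erase i).erase p, (x ^ 2 - (a j') ^ 2) := by
        rw [qpoly, Polynomial.derivative_sum, Polynomial.eval_finset_sum]
        refine Finset.sum_congr rfl fun i hi => ?_
        rw [Polynomial.derivative_C_mul, derivative_finset_prod]
        simp only [Polynomial.derivative_X_sub_C, mul_one, Polynomial.eval_mul,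
          Polynomial.eval_C, Polynomial.eval_finset_sum, Polynomial.eval_prod,
          Polynomial.eval_sub, Polynomial.eval_X, Polynomial.eval_pow]
      have hstep : ∑ i ∈ Finset.Icc 1 m, ∑ p ∈ (Finset.Icc 1 m).erase i,
            2 * a p * ∏ j' ∈ ((Finset.Icc 1 m).erase i).erase p, (x ^ 2 - (a j') ^ 2)
          = ∑ i ∈ Finset.Icc 1 m, ∑ p ∈ (Finset.Icc 1 m).erase i,
            2 * a i * ∏ j' ∈ ((Finset.Icc 1 m).erase i).erase p, (x ^ 2 - (a j') ^ 2) := by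
        rw [sum_erase_swap (Finset.Icc 1 m) (fun i p => 2 * a p *
          ∏ j' ∈ ((Finset.Icc 1 m).erase i).erase p, (x ^ 2 - (a j') ^ 2))]
        refine Finset.sum_congr rfl fun i hi => Finset.sum_congr rfl fun p hp => ?_
        rw [finset_erase_comm]
      rw [← Finset.mul_sum, hstep, hq']
      congr 1
      refine Finset.sum_congr rfl fun i hi => ?_
      rw [Finset.mul_sum]
    intro x hgzero
    rw [hg0 x] at hgzero
    have hxne : x ≠ 0 := by
      rintro rfl
      rw [show ((0:ℝ) ^ 2) = 0 by ring] at hgzero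
      exact hq0 hgzero
    rw [hgx0 x]
    exact mul_ne_zero (mul_ne_zero two_ne_zero hxne) (hqsr _ hgzero)
  constructor
  · intro x y hg
    by_cases hy : y = 0
    · subst hy; exact Or.inl (key2 x hg)
    · rcases eq_or_ne x 0 with hx | hx
      · exact Or.inr ((key1 x y hy hg).2 hx)
      · exact Or.inl ((key1 x y hy hg).1 hx)
  · intro x y hg hgx
    by_cases hy : y = 0
    · subst hy; exact absurd hgx (key2 x hg)
    · by_contra hx
      exact (key1 x y hy hg).1 hx hgx
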